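/- Let H and K be real inner product spaces, D : H → K a linear map, X_R ⊆ H a subspace, and σ ≥ 0 a constant such that ‖Dφ‖ ≤ σ^{1/2}‖φ‖ for all φ ∈ X_R. Let p₃ and p₆ be seminorms on H such that p₆(v) ≤ C_{se} ‖Dv‖ for all v ∈ X_R, for some constant C_{se} > 0. Let b : H × H × H → ℝ be a trilinear map satisfying b(w, v, v) = 0 for all w, v, and |b(w, u, v)| ≤ ½ p₃(w) ‖Du‖ p₆(v) + ½ p₃(w) p₆(u) ‖Dv‖ for all w, u, v ∈ X_R. Let ν > 0, Δt > 0, J ≥ 1, N ≥ 1, and for each j = 1,…,J let u^{j,0}, u^{j,1}, …, u^{j,N} ∈ X_R and let F^{j,n} : H → ℝ (n = 2,…,N) be linear functionals with |F^{j,n}(v)| ≤ γ_{j,n} ‖Dv‖ for all v ∈ X_R. For n ≥ 1 define ⟨u⟩^n := (1/J) Σ_{j=1}^J (2u^{j,n} − u^{j,n−1}) and u'^{j,n} := 2u^{j,n} − u^{j,n−1} − ⟨u⟩^n. Suppose that for n = 1,…,N−1 and all j, and all φ ∈ X_R, ⟨(3u^{j,n+1} − 4u^{j,n} + u^{j,n−1})/(2Δt),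 φ⟩ + b(⟨u⟩^n, u^{j,n+1}, φ) + b(u'^{j,n}, 2u^{j,n} − u^{j,n−1}, φ) + ν⟨Du^{j,n+1}, Dφ⟩ = F^{j,n+1}(φ), and that the time-step condition 2 C_{se}² σ (Δt/ν) p₃(u'^{j,n})² ≤ 1 holds for all j = 1,…,J and all n = 1,…,N−1. Then for every j and every 1 ≤ n ≤ N, (1/4)‖u^{j,n}‖² + (1/4)‖2u^{j,n} − u^{j,n−1}‖² + (νΔt/4) Σ_{n'=1}^{n−1} ‖Du^{j,n'+1}‖² ≤ (Δt/ν) Σ_{n'=1}^{n−1} γ_{j,n'+1}² + (1/4)‖u^{j,1}‖² + (1/4)‖2u^{j,1} − u^{j,0}‖². -/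

import Mathlib

open RealInnerProductSpace

set_option maxHeartbeats 1000000

/-- Abstract form of the improved three-dimensional stability theorem (Theorem 4.2 of the
paper) for the second-order ensemble-POD scheme: under the POD inverse inequality
`‖Dφ‖ ≤ σ^{1/2}‖φ‖` on `X_R`, the Sobolev embedding `p₆(v) ≤ C_se ‖Dv‖`, skew-symmetry and
the Hölder bound `|b(w,u,v)| ≤ ½p₃(w)‖Du‖p₆(v) + ½p₃(w)p₆(u)‖Dv‖` for the trilinear form,
and the time-step condition `2C_se²σ(Δt/ν)p₃(u'^{j,n})² ≤ 1`, every solution of the scheme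
satisfies the discrete energy bound. -/
theorem enB_pod_stability_3d
    {H K : Type*} [NormedAddCommGroup H] [InnerProductSpace ℝ H]
    [NormedAddCommGroup K] [InnerProductSpace ℝ K]
    (D : H →ₗ[ℝ] K) (XR : Submodule ℝ H)
    (σ : ℝ) (hσ : 0 ≤ σ)
    (hinv : ∀ φ ∈ XR, ‖D φ‖ ≤ Real.sqrt σ * ‖φ‖)
    (p₃ p₆ : Seminorm ℝ H)
    (Cse : ℝ) (hCse : 0 < Cse)
    (hp₆ : ∀ v ∈ XR, p₆ v ≤ Cse * ‖D v‖)
    (b : H →ₗ[ℝ] H →ₗ[ℝ] H →ₗ[ℝ] ℝ)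
    (hbskew : ∀ w v : H, b w v v = 0)
    (hb : ∀ w u v : H, w ∈ XR → u ∈ XR → v ∈ XR →
      |b w u v| ≤ (1 / 2) * p₃ w * ‖D u‖ * p₆ v + (1 / 2) * p₃ w * p₆ u * ‖D v‖)
    (ν Δt : ℝ) (hν : 0 < ν) (hΔt : 0 < Δt)
    (J N : ℕ) (hJ : 1 ≤ J) (hN : 1 ≤ N)
    (u : Fin J → ℕ → H) (hu : ∀ (j : Fin J) (n : ℕ), n ≤ N → u j n ∈ XR)
    (F : Fin J → ℕ → H →ₗ[ℝ] ℝ) (γ : Fin J → ℕ → ℝ)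
    (hF : ∀ (j : Fin J) (n : ℕ), 2 ≤ n → n ≤ N →
      ∀ v ∈ XR, |F j n v| ≤ γ j n * ‖D v‖)
    (um : ℕ → H)
    (hum : ∀ n : ℕ, 1 ≤ n →
      um n = (J : ℝ)⁻¹ • ∑ j : Fin J, ((2 : ℝ) • u j n - u j (n - 1)))
    (u' : Fin J → ℕ → H)
    (hu' : ∀ (j : Fin J) (n : ℕ), 1 ≤ n →
      u' j n = (2 : ℝ) • u j n - u j (n - 1) - um n)
    (hscheme : ∀ (j : Fin J) (n : ℕ), 1 ≤ n → n + 1 ≤ N → ∀ φ ∈ XR,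
      ⟪(2 * Δt)⁻¹ • ((3 : ℝ) • u j (n + 1) - (4 : ℝ) • u j n + u j (n - 1)), φ⟫
        + b (um n) (u j (n + 1)) φ
        + b (u' j n) ((2 : ℝ) • u j n - u j (n - 1)) φ
        + ν * ⟪D (u j (n + 1)), D φ⟫ = F j (n + 1) φ)
    (hstep : ∀ (j : Fin J) (n : ℕ), 1 ≤ n → n + 1 ≤ N →
      2 * Cse ^ 2 * σ * (Δt / ν) * (p₃ (u' j n)) ^ 2 ≤ 1) :
    ∀ (j : Fin J) (n : ℕ), 1 ≤ n → n ≤ N →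
      (1 / 4) * ‖u j n‖ ^ 2 + (1 / 4) * ‖(2 : ℝ) • u j n - u j (n - 1)‖ ^ 2
          + (ν * Δt / 4) * ∑ n' ∈ Finset.Icc 1 (n - 1), ‖D (u j (n' + 1))‖ ^ 2 ≤
        (Δt / ν) * ∑ n' ∈ Finset.Icc 1 (n - 1), (γ j (n' + 1)) ^ 2
          + (1 / 4) * ‖u j 1‖ ^ 2 + (1 / 4) * ‖(2 : ℝ) • u j 1 - u j 0‖ ^ 2 := by
  intro j n
  have hν' : ν ≠ 0 := ne_of_gt hν
  have hΔt' : Δt ≠ 0 := ne_of_gt hΔt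
  set s := Real.sqrt σ with hs_def
  have hσeq : s^2 = σ := Real.sq_sqrt hσ
  have hs0 : 0 ≤ s := Real.sqrt_nonneg _
  -- the one-step energy estimate
  have key : ∀ n : ℕ, 1 ≤ n → n + 1 ≤ N →
      (1/4) * ‖u j (n+1)‖^2 + (1/4) * ‖(2:ℝ) • u j (n+1) - u j n‖^2
        + (ν * Δt / 4) * ‖D (u j (n+1))‖^2
      ≤ (1/4) * ‖u j n‖^2 + (1/4) * ‖(2:ℝ) • u j n - u j (n-1)‖^2
        + (Δt / ν) * (γ j (n+1))^2 := by
    intro n hn hnN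
    set a := u j (n+1) with ha_def
    set bb := u j n with hb_def
    set c := u j (n-1) with hc_def
    set d := a - (2:ℝ) • bb + c with hd_def
    have ha : a ∈ XR := hu j (n+1) hnN
    have hbm : bb ∈ XR := hu j n (by omega)
    have hcm : c ∈ XR := hu j (n-1) (by omega)
    have hdm : d ∈ XR := XR.add_mem (XR.sub_mem ha (XR.smul_mem _ hbm)) hcm
    have humm : um n ∈ XR := by
      rw [hum n hn]
      exact XR.smul_mem _ (Submodule.sum_mem _ fun i _ =>
        XR.sub_mem (XR.smul_mem _ (hu i n (by omega))) (hu i (n-1) (by omega)))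
    have hu'm : u' j n ∈ XR := by
      rw [hu' j n hn]
      exact XR.sub_mem (XR.sub_mem (XR.smul_mem _ hbm) hcm) humm
    set A := ‖D a‖ with hA_def
    set Dd := ‖d‖ with hDd_def
    set P := p₃ (u' j n) with hP_def
    set G := γ j (n+1) with hG_def
    have hA0 : 0 ≤ A := norm_nonneg _
    have hDd0 : 0 ≤ Dd := norm_nonneg _
    have hP0 : 0 ≤ P := apply_nonneg _ _
    -- the scheme tested with φ = a
    have hs := hscheme j n hn hnN a ha
    have hskew1 : b (um n) a a = 0 := hbskew _ _
    have hBeq : b (u' j n) ((2:ℝ) • bb - c) a = - b (u' j n) d a := by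
      have h2 : (2:ℝ) • bb - c = a - d := by rw [hd_def]; module
      rw [h2, map_sub, LinearMap.sub_apply, hbskew]
      ring
    have hDaa : ⟪D a, D a⟫ = A^2 := real_inner_self_eq_norm_sq (D a)
    have hinner : ⟪(2*Δt)⁻¹ • ((3:ℝ) • a - (4:ℝ) • bb + c), a⟫
        = (2*Δt)⁻¹ * ⟪(3:ℝ) • a - (4:ℝ) • bb + c, a⟫ := real_inner_smul_left _ _ _
    rw [hinner, hskew1, hBeq, hDaa] at hs
    -- multiply the scheme equation through by 2Δt
    have hI : ⟪(3:ℝ) • a - (4:ℝ) • bb + c, a⟫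
        = 2*Δt * (F j (n+1) a) + 2*Δt * (b (u' j n) d a) - 2*Δt * (ν * A^2) := by
      field_simp at hs
      linarith
    -- the G-stability identity
    have hid : 2 * ⟪(3:ℝ) • a - (4:ℝ) • bb + c, a⟫ =
        ‖a‖^2 + ‖(2:ℝ) • a - bb‖^2 - ‖bb‖^2 - ‖(2:ℝ) • bb - c‖^2 + Dd^2 := by
      simp only [hDd_def, hd_def, ← real_inner_self_eq_norm_sq, inner_sub_left,
        inner_sub_right, inner_add_left, inner_add_right, real_inner_smul_left,
        real_inner_smul_right]
      rw [real_inner_comm bb a, real_inner_comm c a, real_inner_comm c bb]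
      ring
    -- bound on forcing
    have hFb : F j (n+1) a ≤ G * A := by
      have := hF j (n+1) (by omega) hnN a ha
      calc F j (n+1) a ≤ |F j (n+1) a| := le_abs_self _
        _ ≤ G * A := this
    -- bound on nonlinear term
    have hbb2 : b (u' j n) d a ≤ Cse * s * P * Dd * A := by
      have h1 := hb (u' j n) d a hu'm hdm ha
      have h2 := hp₆ d hdm
      have h3 := hp₆ a ha
      have h4 : 0 ≤ ‖D d‖ := norm_nonneg _
      have hDdb : ‖D d‖ ≤ s * Dd := hinv d hdm
      have t1 : (1/2) * P * ‖D d‖ * p₆ a ≤ ((1/2) * P * ‖D d‖) * (Cse * A) :=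
        mul_le_mul_of_nonneg_left h3 (by
          exact mul_nonneg (mul_nonneg (by norm_num) hP0) h4)
      have t2 : ((1/2) * P) * p₆ d ≤ ((1/2) * P) * (Cse * ‖D d‖) :=
        mul_le_mul_of_nonneg_left h2 (mul_nonneg (by norm_num) hP0)
      have t2' : ((1/2) * P) * p₆ d * A ≤ ((1/2) * P) * (Cse * ‖D d‖) * A :=
        mul_le_mul_of_nonneg_right t2 hA0
      have t3 : (Cse * P) * ‖D d‖ ≤ (Cse * P) * (s * Dd) :=
        mul_le_mul_of_nonneg_left hDdb (mul_nonneg hCse.le hP0)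
      have t3' : (Cse * P) * ‖D d‖ * A ≤ (Cse * P) * (s * Dd) * A :=
        mul_le_mul_of_nonneg_right t3 hA0
      have habs := le_abs_self (b (u' j n) d a)
      linarith [t1, t2', t3', h1, habs]
    -- time step condition, multiplied out
    have hstep' : 2 * Cse^2 * s^2 * Δt * P^2 ≤ ν := by
      have h := hstep j n hn hnN
      have he : 2 * Cse^2 * s^2 * Δt * P^2 = ν * (2 * Cse^2 * σ * (Δt/ν) * P^2) := by
        rw [← hσeq]; field_simp
      rw [he]
      calc ν * (2 * Cse^2 * σ * (Δt/ν) * P^2) ≤ ν * 1 :=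
            mul_le_mul_of_nonneg_left h hν.le
        _ = ν := mul_one ν
    -- Young for nonlinear term
    have hYoungB : 2*Δt * (b (u' j n) d a) ≤ (1/2) * Dd^2 + 2*Δt^2 * Cse^2 * s^2 * P^2 * A^2 := by
      have t := mul_le_mul_of_nonneg_left hbb2 (by positivity : (0:ℝ) ≤ 2*Δt)
      have q : (0:ℝ) ≤ (Dd - 2*Δt*(Cse * s * P)*A)^2 := sq_nonneg _
      linarith [t, q]
    -- Young for forcing (times ν)
    have hYoungF : 2*Δt*ν * (F j (n+1) a) ≤ (Δt*ν^2/2) * A^2 + 2*Δt * G^2 := by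
      have t := mul_le_mul_of_nonneg_left hFb (by positivity : (0:ℝ) ≤ 2*Δt*ν)
      have q : (0:ℝ) ≤ Δt*(ν*A - 2*G)^2 := by positivity
      linarith [t, q]
    have hB' : ν * (2*Δt * (b (u' j n) d a)) ≤
        ν * ((1/2) * Dd^2 + 2*Δt^2 * Cse^2 * s^2 * P^2 * A^2) :=
      mul_le_mul_of_nonneg_left hYoungB hν.le
    have h6' : ν * (2*Δt^2 * Cse^2 * s^2 * P^2 * A^2) ≤ Δt * ν^2 * A^2 := by
      have := mul_le_mul_of_nonneg_left hstep' (by positivity : (0:ℝ) ≤ Δt*ν*A^2)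
      linarith
    have hIν : ν * ⟪(3:ℝ) • a - (4:ℝ) • bb + c, a⟫
        = ν * (2*Δt * (F j (n+1) a) + 2*Δt * (b (u' j n) d a) - 2*Δt * (ν * A^2)) := by
      rw [hI]
    have hidν : ν * (2 * ⟪(3:ℝ) • a - (4:ℝ) • bb + c, a⟫)
        = ν * (‖a‖^2 + ‖(2:ℝ) • a - bb‖^2 - ‖bb‖^2 - ‖(2:ℝ) • bb - c‖^2 + Dd^2) := by
      rw [hid]
    have hνDd : 0 ≤ ν * Dd^2 := mul_nonneg hν.le (sq_nonneg Dd)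
    -- multiplied energy inequality
    have keyν : ν * (4 * ((1/4) * ‖a‖^2 + (1/4) * ‖(2:ℝ) • a - bb‖^2) + ν*Δt*A^2)
        ≤ ν * (4 * ((1/4) * ‖bb‖^2 + (1/4) * ‖(2:ℝ) • bb - c‖^2)) + 4*Δt*G^2 := by
      linarith [hIν, hidν, hYoungF, hB', h6', hνDd]
    have h4ν : (0:ℝ) < 4*ν := by positivity
    rw [← mul_le_mul_iff_right₀ h4ν]
    have hrhs : 4*ν * ((1/4) * ‖bb‖^2 + (1/4) * ‖(2:ℝ) • bb - c‖^2 + (Δt/ν) * G^2)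
        = ν * (4 * ((1/4) * ‖bb‖^2 + (1/4) * ‖(2:ℝ) • bb - c‖^2)) + 4*Δt*G^2 := by
      field_simp
    have hlhs : 4*ν * ((1/4) * ‖a‖^2 + (1/4) * ‖(2:ℝ) • a - bb‖^2 + (ν*Δt/4) * A^2)
        = ν * (4 * ((1/4) * ‖a‖^2 + (1/4) * ‖(2:ℝ) • a - bb‖^2) + ν*Δt*A^2) := by
      ring
    rw [hlhs, hrhs]
    exact keyν
  -- induction on n
  induction n with
  | zero => intro hn _; omega
  | succ m ih =>
    intro _ hnN
    rcases Nat.eq_zero_or_pos m with hm0 | hm1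
    · subst hm0
      have : Finset.Icc 1 (0+1-1) = (∅ : Finset ℕ) := by
        simp
      rw [this]
      simp
    · have ihm := ih hm1 (by omega)
      obtain ⟨k, rfl⟩ : ∃ k, m = k + 1 := ⟨m - 1, by omega⟩
      have hkey := key (k+1) (by omega) hnN
      have hidx : k+1+1-1 = (k+1-1)+1 := by omega
      have hidx2 : k+1-1+1 = k+1 := by omega
      have hsum1 : ∑ n' ∈ Finset.Icc 1 (k+1+1-1), ‖D (u j (n'+1))‖^2
          = (∑ n' ∈ Finset.Icc 1 (k+1-1), ‖D (u j (n'+1))‖^2) + ‖D (u j (k+1+1))‖^2 := by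
        rw [hidx, Finset.sum_Icc_succ_top (by omega : 1 ≤ k+1-1+1), hidx2]
      have hsum2 : ∑ n' ∈ Finset.Icc 1 (k+1+1-1), (γ j (n'+1))^2
          = (∑ n' ∈ Finset.Icc 1 (k+1-1), (γ j (n'+1))^2) + (γ j (k+1+1))^2 := by
        rw [hidx, Finset.sum_Icc_succ_top (by omega : 1 ≤ k+1-1+1), hidx2]
      rw [hsum1, hsum2, show k+1+1-1 = k+1 from rfl]
      linarith [hkey, ihm]
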